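/- Let X and Y be real-valued random variables on a probability space whose joint distribution function is H(x,y) = P(X ≤ x, Y ≤ y) and whose marginal distribution functions F(x) = P(X ≤ x) and G(y) = P(Y ≤ y) are both continuous. Then there exists a unique copula C such that H(x,y) = C(F(x), G(y)) for all real x and y. -/

import Mathlib

open MeasureTheory Set Filter Topology

/-- A (bivariate) copula: a function `C` on `[0,1]²` (represented as a function on `ℝ²`
whose values on the unit square are the relevant ones) taking values in `[0,1]`, with
`C(u,0) = C(0,v) = 0`, `C(u,1) = u`, `C(1,v) = v`, and which is 2-increasing. -/
def IsCopula (C : ℝ → ℝ → ℝ) : Prop :=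
  (∀ u ∈ Icc (0:ℝ) 1, ∀ v ∈ Icc (0:ℝ) 1, C u v ∈ Icc (0:ℝ) 1) ∧
  (∀ u ∈ Icc (0:ℝ) 1, C u 0 = 0 ∧ C u 1 = u) ∧
  (∀ v ∈ Icc (0:ℝ) 1, C 0 v = 0 ∧ C 1 v = v) ∧
  (∀ u₁ ∈ Icc (0:ℝ) 1, ∀ u₂ ∈ Icc (0:ℝ) 1, ∀ v₁ ∈ Icc (0:ℝ) 1, ∀ v₂ ∈ Icc (0:ℝ) 1,
    u₁ ≤ u₂ → v₁ ≤ v₂ → 0 ≤ C u₂ v₂ - C u₂ v₁ - C u₁ v₂ + C u₁ v₁)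

section SklarAux

variable {Ω : Type*} [MeasurableSpace Ω] {μ : Measure Ω} [IsProbabilityMeasure μ]
  {X : Ω → ℝ} {F : ℝ → ℝ}

lemma sklar_ofReal (hF : ∀ x, F x = (μ {ω | X ω ≤ x}).toReal) (x : ℝ) :
    μ {ω | X ω ≤ x} = ENNReal.ofReal (F x) := by
  rw [hF, ENNReal.ofReal_toReal (measure_ne_top μ _)]

lemma sklar_nonneg (hF : ∀ x, F x = (μ {ω | X ω ≤ x}).toReal) (x : ℝ) : 0 ≤ F x := by
  rw [hF]; exact ENNReal.toReal_nonneg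

lemma sklar_le_one (hF : ∀ x, F x = (μ {ω | X ω ≤ x}).toReal) (x : ℝ) : F x ≤ 1 := by
  rw [hF]
  calc (μ {ω | X ω ≤ x}).toReal ≤ (μ univ).toReal :=
        ENNReal.toReal_mono (measure_ne_top μ _) (measure_mono (subset_univ _))
    _ = 1 := by simp

lemma sklar_mono (hF : ∀ x, F x = (μ {ω | X ω ≤ x}).toReal) : Monotone F := by
  intro a b hab
  rw [hF, hF]
  exact ENNReal.toReal_mono (measure_ne_top μ _)
    (measure_mono fun ω h => le_trans h hab)

lemma sklar_small (hX : Measurable X) (hF : ∀ x, F x = (μ {ω | X ω ≤ x}).toReal)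
    {ε : ℝ} (hε : 0 < ε) : ∃ x : ℝ, F x < ε := by
  have hanti : Antitone (fun n : ℕ => {ω | X ω ≤ -(n:ℝ)}) := by
    intro n m hnm ω hω
    simp only [mem_setOf_eq] at hω ⊢
    have : (n:ℝ) ≤ m := Nat.cast_le.2 hnm
    linarith
  have hempty : (⋂ n : ℕ, {ω | X ω ≤ -(n:ℝ)}) = ∅ := by
    ext ω
    simp only [mem_iInter, mem_setOf_eq, mem_empty_iff_false, iff_false, not_forall, not_le]
    obtain ⟨n, hn⟩ := exists_nat_gt (-(X ω))
    exact ⟨n, by linarith⟩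
  have htend : Tendsto (fun n : ℕ => μ {ω | X ω ≤ -(n:ℝ)}) atTop (𝓝 0) := by
    have := tendsto_measure_iInter_atTop (μ := μ)
      (s := fun n : ℕ => {ω | X ω ≤ -(n:ℝ)})
      (fun n => (hX measurableSet_Iic).nullMeasurableSet) hanti ⟨0, measure_ne_top μ _⟩
    rwa [hempty, measure_empty] at this
  have : ∀ᶠ n : ℕ in atTop, μ {ω | X ω ≤ -(n:ℝ)} < ENNReal.ofReal ε :=
    htend.eventually_lt_const (by simpa using ENNReal.ofReal_pos.2 hε)
  obtain ⟨n, hn⟩ := this.exists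
  refine ⟨-(n:ℝ), ?_⟩
  rw [hF]
  exact ENNReal.toReal_lt_of_lt_ofReal hn

lemma sklar_big (hX : Measurable X) (hF : ∀ x, F x = (μ {ω | X ω ≤ x}).toReal)
    {ε : ℝ} (hε : 0 < ε) : ∃ x : ℝ, 1 - ε < F x := by
  have hmono : Monotone (fun n : ℕ => {ω | X ω ≤ (n:ℝ)}) := by
    intro n m hnm ω hω
    simp only [mem_setOf_eq] at hω ⊢
    have : (n:ℝ) ≤ m := Nat.cast_le.2 hnm
    linarith
  have huniv : (⋃ n : ℕ, {ω | X ω ≤ (n:ℝ)}) = univ := by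
    ext ω
    simp only [mem_iUnion, mem_setOf_eq, mem_univ, iff_true]
    obtain ⟨n, hn⟩ := exists_nat_gt (X ω)
    exact ⟨n, hn.le⟩
  have htend : Tendsto (fun n : ℕ => μ {ω | X ω ≤ (n:ℝ)}) atTop (𝓝 1) := by
    have := tendsto_measure_iUnion_atTop (μ := μ) (s := fun n : ℕ => {ω | X ω ≤ (n:ℝ)}) hmono
    rwa [huniv, measure_univ] at this
  have hlt : ENNReal.ofReal (1 - ε) < 1 := by
    rw [ENNReal.ofReal_lt_one]; linarith
  obtain ⟨n, hn⟩ := (htend.eventually_const_lt hlt).exists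
  refine ⟨(n:ℝ), ?_⟩
  by_contra hc
  push_neg at hc
  have := ENNReal.ofReal_le_ofReal hc
  rw [← sklar_ofReal hF] at this
  exact absurd (lt_of_lt_of_le hn this) (lt_irrefl _)

lemma sklar_surj (hX : Measurable X) (hF : ∀ x, F x = (μ {ω | X ω ≤ x}).toReal)
    (hFcont : Continuous F) {u : ℝ} (hu : u ∈ Ioo (0:ℝ) 1) : ∃ x, F x = u := by
  obtain ⟨a, ha⟩ := sklar_small hX hF hu.1
  have hu1 := hu.1
  have hu2 := hu.2
  obtain ⟨b, hb⟩ := sklar_big hX hF (show (0:ℝ) < 1 - u by linarith)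
  have hb' : u < F b := by linarith
  have hab : a ≤ b := by
    by_contra hc
    push_neg at hc
    have := sklar_mono hF hc.le
    linarith
  have := intermediate_value_Icc hab hFcont.continuousOn
  obtain ⟨x, _, hx⟩ := this ⟨ha.le, hb'.le⟩
  exact ⟨x, hx⟩

lemma sklar_pit_zero (hX : Measurable X) (hF : ∀ x, F x = (μ {ω | X ω ≤ x}).toReal)
    (hFcont : Continuous F) : μ {ω | F (X ω) ≤ 0} = 0 := by
  have key : ∀ ε : ℝ, 0 < ε → μ {ω | F (X ω) ≤ 0} ≤ ENNReal.ofReal ε := by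
    intro ε hε
    rcases lt_or_ge ε 1 with h1 | h1
    · obtain ⟨x, hx⟩ := sklar_surj hX hF hFcont ⟨hε, h1⟩
      have hsub : {ω | F (X ω) ≤ 0} ⊆ {ω | X ω ≤ x} := by
        intro ω hω
        simp only [mem_setOf_eq] at hω ⊢
        by_contra hc
        push_neg at hc
        have h2 : F x ≤ F (X ω) := sklar_mono hF hc.le
        rw [hx] at h2
        linarith
      calc μ {ω | F (X ω) ≤ 0} ≤ μ {ω | X ω ≤ x} := measure_mono hsub
        _ = ENNReal.ofReal (F x) := sklar_ofReal hF x
        _ = ENNReal.ofReal ε := by rw [hx]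
    · calc μ {ω | F (X ω) ≤ 0} ≤ 1 := prob_le_one
        _ = ENNReal.ofReal 1 := by simp
        _ ≤ ENNReal.ofReal ε := ENNReal.ofReal_le_ofReal h1
  refine le_antisymm ?_ (zero_le)
  refine ENNReal.le_of_forall_pos_le_add fun ε hε _ => ?_
  rw [zero_add]
  calc μ {ω | F (X ω) ≤ 0} ≤ ENNReal.ofReal ε := key ε (by exact_mod_cast hε)
    _ = (ε : ENNReal) := ENNReal.ofReal_coe_nnreal

lemma sklar_pit (hX : Measurable X) (hF : ∀ x, F x = (μ {ω | X ω ≤ x}).toReal)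
    (hFcont : Continuous F) {u : ℝ} (hu : u ∈ Icc (0:ℝ) 1) :
    μ {ω | F (X ω) ≤ u} = ENNReal.ofReal u := by
  rcases hu.1.eq_or_lt with h0 | h0
  · rw [← h0, sklar_pit_zero hX hF hFcont]
    simp
  rcases hu.2.eq_or_lt with h1 | h1
  · subst h1
    have : {ω | F (X ω) ≤ 1} = univ := by
      ext ω; simp [sklar_le_one hF (X ω)]
    rw [this, measure_univ]
    simp
  · -- interior case
    set S : Set ℝ := {x | F x = u} with hS
    have hne : S.Nonempty := sklar_surj hX hF hFcont ⟨h0, h1⟩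
    obtain ⟨b, hb⟩ := sklar_big hX hF (show (0:ℝ) < 1 - u by linarith)
    have hb' : u < F b := by linarith
    have hbdd : BddAbove S := by
      refine ⟨b, fun x hx => ?_⟩
      by_contra hc
      push_neg at hc
      have := sklar_mono hF hc.le
      rw [hx] at this
      linarith
    have hclosed : IsClosed S := isClosed_eq hFcont continuous_const
    have hx₀ : F (sSup S) = u := hclosed.csSup_mem hne hbdd
    have hset : {ω | F (X ω) ≤ u} = {ω | X ω ≤ sSup S} := by
      ext ω
      simp only [mem_setOf_eq]
      constructor
      · intro h
        by_contra hc
        push_neg at hc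
        have h2 : u ≤ F (X ω) := hx₀ ▸ sklar_mono hF hc.le
        have h3 : F (X ω) = u := le_antisymm h h2
        exact absurd (le_csSup hbdd h3) (not_le.2 hc)
      · intro h
        calc F (X ω) ≤ F (sSup S) := sklar_mono hF h
          _ = u := hx₀
    rw [hset, sklar_ofReal hF, hx₀]

lemma sklar_null (hX : Measurable X) (hF : ∀ x, F x = (μ {ω | X ω ≤ x}).toReal)
    (hFcont : Continuous F) (x : ℝ) :
    μ ({ω | F (X ω) ≤ F x} \ {ω | X ω ≤ x}) = 0 := by
  have hsub : {ω | X ω ≤ x} ⊆ {ω | F (X ω) ≤ F x} := fun ω h => sklar_mono hF h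
  have hm : MeasurableSet {ω | X ω ≤ x} := hX measurableSet_Iic
  rw [measure_diff hsub hm.nullMeasurableSet (measure_ne_top μ _),
    sklar_pit hX hF hFcont ⟨sklar_nonneg hF x, sklar_le_one hF x⟩,
    sklar_ofReal hF x, tsub_self]

end SklarAux

/-- **Sklar's theorem** (existence and uniqueness for continuous margins):
if `X, Y` are real random variables with joint distribution function `H` and
continuous marginal distribution functions `F, G`, then there is a copula `C`,
unique on `[0,1]²`, such that `H(x,y) = C(F(x), G(y))` for all `x, y`. -/
theorem sklar_existence_uniqueness
    {Ω : Type*} [MeasurableSpace Ω] (μ : Measure Ω) [IsProbabilityMeasure μ]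
    (X Y : Ω → ℝ) (hX : Measurable X) (hY : Measurable Y)
    (F G : ℝ → ℝ) (H : ℝ → ℝ → ℝ)
    (hF : ∀ x, F x = (μ {ω | X ω ≤ x}).toReal)
    (hG : ∀ y, G y = (μ {ω | Y ω ≤ y}).toReal)
    (hH : ∀ x y, H x y = (μ {ω | X ω ≤ x ∧ Y ω ≤ y}).toReal)
    (hFcont : Continuous F) (hGcont : Continuous G) :
    ∃ C : ℝ → ℝ → ℝ, IsCopula C ∧ (∀ x y, H x y = C (F x) (G y)) ∧
      ∀ C' : ℝ → ℝ → ℝ, IsCopula C' → (∀ x y, H x y = C' (F x) (G y)) →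
        ∀ u ∈ Icc (0:ℝ) 1, ∀ v ∈ Icc (0:ℝ) 1, C' u v = C u v := by
  classical
  set A : ℝ → Set Ω := fun u => {ω | F (X ω) ≤ u} with hA
  set B : ℝ → Set Ω := fun v => {ω | G (Y ω) ≤ v} with hB
  have hAmeas : ∀ u, MeasurableSet (A u) :=
    fun u => (hFcont.measurable.comp hX) measurableSet_Iic
  have hBmeas : ∀ v, MeasurableSet (B v) :=
    fun v => (hGcont.measurable.comp hY) measurableSet_Iic
  have hAmono : ∀ ⦃u₁ u₂ : ℝ⦄, u₁ ≤ u₂ → A u₁ ⊆ A u₂ :=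
    fun u₁ u₂ h ω hω => le_trans hω h
  have hBmono : ∀ ⦃v₁ v₂ : ℝ⦄, v₁ ≤ v₂ → B v₁ ⊆ B v₂ :=
    fun v₁ v₂ h ω hω => le_trans hω h
  set C : ℝ → ℝ → ℝ := fun u v => (μ (A u ∩ B v)).toReal with hC
  have hle1 : ∀ s : Set Ω, (μ s).toReal ≤ 1 := by
    intro s
    calc (μ s).toReal ≤ (μ univ).toReal :=
          ENNReal.toReal_mono (measure_ne_top μ _) (measure_mono (subset_univ _))
      _ = 1 := by simp
  -- `C u 1 = u` and `C 1 v = v` type facts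
  have hmarg1 : ∀ u ∈ Icc (0:ℝ) 1, C u 1 = u := by
    intro u hu
    have : A u ∩ B 1 = A u := by
      apply inter_eq_self_of_subset_left
      intro ω _
      exact sklar_le_one hG (Y ω)
    rw [hC]
    simp only
    rw [this, sklar_pit hX hF hFcont hu, ENNReal.toReal_ofReal hu.1]
  have hmarg2 : ∀ v ∈ Icc (0:ℝ) 1, C 1 v = v := by
    intro v hv
    have : A 1 ∩ B v = B v := by
      apply inter_eq_self_of_subset_right
      intro ω _
      exact sklar_le_one hF (X ω)
    rw [hC]
    simp only
    rw [this, sklar_pit hY hG hGcont hv, ENNReal.toReal_ofReal hv.1]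
  have hzero1 : ∀ u, C u 0 = 0 := by
    intro u
    have : μ (A u ∩ B 0) = 0 :=
      measure_mono_null (inter_subset_right) (sklar_pit_zero hY hG hGcont)
    rw [hC]; simp only; rw [this]; simp
  have hzero2 : ∀ v, C 0 v = 0 := by
    intro v
    have : μ (A 0 ∩ B v) = 0 :=
      measure_mono_null (inter_subset_left) (sklar_pit_zero hX hF hFcont)
    rw [hC]; simp only; rw [this]; simp
  have hHC : ∀ x y, H x y = C (F x) (G y) := by
    intro x y
    have hsubA : {ω | X ω ≤ x} ⊆ A (F x) := fun ω h => sklar_mono hF h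
    have hsubB : {ω | Y ω ≤ y} ⊆ B (G y) := fun ω h => sklar_mono hG h
    have hnullA := sklar_null hX hF hFcont x
    have hnullB := sklar_null hY hG hGcont y
    have hseteq : μ (A (F x) ∩ B (G y)) = μ ({ω | X ω ≤ x} ∩ {ω | Y ω ≤ y}) := by
      refine le_antisymm ?_ (measure_mono (inter_subset_inter hsubA hsubB))
      have hsub2 : A (F x) ∩ B (G y) ⊆
          ({ω | X ω ≤ x} ∩ {ω | Y ω ≤ y}) ∪
          ((A (F x) \ {ω | X ω ≤ x}) ∪ (B (G y) \ {ω | Y ω ≤ y})) := by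
        intro ω ⟨h1, h2⟩
        by_cases hx1 : X ω ≤ x
        · by_cases hy1 : Y ω ≤ y
          · exact Or.inl ⟨hx1, hy1⟩
          · exact Or.inr (Or.inr ⟨h2, hy1⟩)
        · exact Or.inr (Or.inl ⟨h1, hx1⟩)
      calc μ (A (F x) ∩ B (G y)) ≤ μ (({ω | X ω ≤ x} ∩ {ω | Y ω ≤ y}) ∪
            ((A (F x) \ {ω | X ω ≤ x}) ∪ (B (G y) \ {ω | Y ω ≤ y}))) := measure_mono hsub2
        _ ≤ μ ({ω | X ω ≤ x} ∩ {ω | Y ω ≤ y}) +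
            μ ((A (F x) \ {ω | X ω ≤ x}) ∪ (B (G y) \ {ω | Y ω ≤ y})) := measure_union_le _ _
        _ = μ ({ω | X ω ≤ x} ∩ {ω | Y ω ≤ y}) := by
            rw [measure_union_null hnullA hnullB, add_zero]
    have : {ω | X ω ≤ x ∧ Y ω ≤ y} = {ω | X ω ≤ x} ∩ {ω | Y ω ≤ y} := rfl
    rw [hH, hC]
    simp only
    rw [hseteq, this]
  refine ⟨C, ⟨?_, ?_, ?_, ?_⟩, hHC, ?_⟩
  · -- range
    intro u _ v _
    exact ⟨ENNReal.toReal_nonneg, hle1 _⟩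
  · intro u hu
    exact ⟨hzero1 u, hmarg1 u hu⟩
  · intro v hv
    exact ⟨hzero2 v, hmarg2 v hv⟩
  · -- 2-increasing
    intro u₁ _ u₂ _ v₁ _ v₂ _ hu12 hv12
    have hA12 : A u₁ ⊆ A u₂ := hAmono hu12
    have hB12 : B v₁ ⊆ B v₂ := hBmono hv12
    have hkey : μ (A u₂ ∩ B v₁) + μ (A u₁ ∩ B v₂) ≤ μ (A u₂ ∩ B v₂) + μ (A u₁ ∩ B v₁) := by
      have hunion : (A u₂ ∩ B v₁) ∪ (A u₁ ∩ B v₂) ⊆ A u₂ ∩ B v₂ := by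
        rintro ω (⟨h1, h2⟩ | ⟨h1, h2⟩)
        · exact ⟨h1, hB12 h2⟩
        · exact ⟨hA12 h1, h2⟩
      have hinter : (A u₂ ∩ B v₁) ∩ (A u₁ ∩ B v₂) = A u₁ ∩ B v₁ := by
        ext ω
        constructor
        · rintro ⟨⟨_, h2⟩, ⟨h3, _⟩⟩
          exact ⟨h3, h2⟩
        · rintro ⟨h1, h2⟩
          exact ⟨⟨hA12 h1, h2⟩, ⟨h1, hB12 h2⟩⟩
      calc μ (A u₂ ∩ B v₁) + μ (A u₁ ∩ B v₂)
          = μ ((A u₂ ∩ B v₁) ∪ (A u₁ ∩ B v₂)) + μ ((A u₂ ∩ B v₁) ∩ (A u₁ ∩ B v₂)) :=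
            (measure_union_add_inter _ ((hAmeas u₁).inter (hBmeas v₂))).symm
        _ ≤ μ (A u₂ ∩ B v₂) + μ (A u₁ ∩ B v₁) := by
            rw [hinter]
            exact add_le_add (measure_mono hunion) le_rfl
    have htr : (μ (A u₂ ∩ B v₁)).toReal + (μ (A u₁ ∩ B v₂)).toReal ≤
        (μ (A u₂ ∩ B v₂)).toReal + (μ (A u₁ ∩ B v₁)).toReal := by
      rw [← ENNReal.toReal_add (measure_ne_top μ _) (measure_ne_top μ _),
        ← ENNReal.toReal_add (measure_ne_top μ _) (measure_ne_top μ _)]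
      exact ENNReal.toReal_mono
        (by simp [ENNReal.add_ne_top, measure_ne_top]) hkey
    simp only [hC]
    linarith
  · -- uniqueness
    intro C' hC' hHC' u hu v hv
    obtain ⟨hrange', hmargu', hmargv', _⟩ := hC'
    rcases hu.1.eq_or_lt with h0u | h0u
    · rw [← h0u, (hmargv' v hv).1, hzero2]
    rcases hu.2.eq_or_lt with h1u | h1u
    · subst h1u
      rw [(hmargv' v hv).2, hmarg2 v hv]
    rcases hv.1.eq_or_lt with h0v | h0v
    · rw [← h0v, (hmargu' u hu).1, hzero1]
    rcases hv.2.eq_or_lt with h1v | h1v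
    · subst h1v
      rw [(hmargu' u hu).2, hmarg1 u hu]
    · obtain ⟨x, hx⟩ := sklar_surj hX hF hFcont ⟨h0u, h1u⟩
      obtain ⟨y, hy⟩ := sklar_surj hY hG hGcont ⟨h0v, h1v⟩
      have h1 := hHC' x y
      have h2 := hHC x y
      rw [hx, hy] at h1 h2
      rw [← h1, ← h2]
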